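/- arXiv:2107.01240 — 4 statements merged into one kernel-verified Lean document; each statement's English description precedes it below -/
import Mathlib

section
/- Let n > 2, m₁ > ... > mₙ > 0, m_{s-1} > 1+r ≥ m_s with s ∈ {2,...,n} and 1+r ≠ mₙ, I = {1,...,s-1}, J = {s,...,n}. Every solution of the system Σₖ qₖ = 1, Σₖ m_k qₖ = 1+r, qₖ ≥ 0 is a convex combination of the measures Q_{i,j} (i ∈ I, j ∈ J) defined by Q_{i,j}({i}) = ((1+r)−m_j)/(m_i−m_j), Q_{i,j}({j}) = (m_i−(1+r))/(m_i−m_j), and 0 elsewhere; i.e., the extreme points of the closed set of martingale measures are exactly the Q_{i,j}. -/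
/-- Every solution of the martingale system in the n-nomial model is a convex
combination of the extreme measures `Q_{i,j}`, `i ∈ I`, `j ∈ J`. -/
theorem martingale_measure_convex_combination (n : ℕ) (hn : 2 < n) (m : Fin n → ℝ)
    (hm : StrictAnti m) (hmpos : ∀ k, 0 < m k) (r : ℝ)
    (s : Fin n) (hs : 1 ≤ s.val)
    (h1 : 1 + r < m ⟨s.val - 1, Nat.lt_of_le_of_lt (Nat.sub_le _ _) s.isLt⟩)
    (h2 : m s ≤ 1 + r)
    (hrn : 1 + r ≠ m ⟨n - 1, by omega⟩)
    (q : Fin n → ℝ) (hq0 : ∀ k, 0 ≤ q k) (hq1 : ∑ k, q k = 1)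
    (hqm : ∑ k, m k * q k = 1 + r) :
    let Q : Fin n → Fin n → Fin n → ℝ := fun i j k =>
      if k = i then ((1 + r) - m j) / (m i - m j)
      else if k = j then (m i - (1 + r)) / (m i - m j) else 0
    ∃ w : Fin n → Fin n → ℝ,
      (∀ i j, 0 ≤ w i j) ∧
      (∀ i j, w i j ≠ 0 → i.val < s.val ∧ s.val ≤ j.val) ∧
      (∑ i, ∑ j, w i j) = 1 ∧
      (∀ k, q k = ∑ i, ∑ j, w i j * Q i j k) := by
  intro Q
  classical
  set c : ℝ := 1 + r with hc
  -- basic facts about m on I and J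
  have hmI : ∀ i : Fin n, i.val < s.val → c < m i := by
    intro i hi
    have hle : m ⟨s.val - 1, Nat.lt_of_le_of_lt (Nat.sub_le _ _) s.isLt⟩ ≤ m i := by
      apply hm.antitone
      simp only [Fin.le_def]
      omega
    linarith
  have hmJ : ∀ j : Fin n, ¬ j.val < s.val → m j ≤ c := by
    intro j hj
    have : m j ≤ m s := hm.antitone (by simp only [Fin.le_def]; omega)
    linarith
  have hIJ : ∀ i j : Fin n, i.val < s.val → ¬ j.val < s.val → m j < m i := by
    intro i j hi hj
    exact hm (by simp only [Fin.lt_def]; omega)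
  set I : Finset (Fin n) := Finset.univ.filter (fun i : Fin n => i.val < s.val) with hIdef
  set J : Finset (Fin n) := Finset.univ.filter (fun j : Fin n => ¬ j.val < s.val) with hJdef
  have hmemI : ∀ i : Fin n, i ∈ I ↔ i.val < s.val := by
    intro i; simp [hIdef]
  have hmemJ : ∀ j : Fin n, j ∈ J ↔ ¬ j.val < s.val := by
    intro j; simp [hJdef]
  have hsumz : ∑ k, q k * (m k - c) = 0 := by
    have : ∑ k, q k * (m k - c) = (∑ k, m k * q k) - c * ∑ k, q k := by
      rw [Finset.mul_sum, ← Finset.sum_sub_distrib]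
      exact Finset.sum_congr rfl (fun k _ => by ring)
    rw [this, hq1, hqm]; ring
  have hsplit : (∑ k ∈ I, q k * (m k - c)) + (∑ k ∈ J, q k * (m k - c)) = 0 := by
    rw [hIdef, hJdef, Finset.sum_filter_add_sum_filter_not]
    exact hsumz
  set A : ℝ := ∑ k ∈ I, q k * (m k - c) with hAdef
  have hAB : ∑ k ∈ J, q k * (c - m k) = A := by
    have : ∑ k ∈ J, q k * (c - m k) = - ∑ k ∈ J, q k * (m k - c) := by
      rw [← Finset.sum_neg_distrib]
      exact Finset.sum_congr rfl (fun k _ => by ring)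
    rw [this]; linarith
  have hA0 : 0 ≤ A := by
    apply Finset.sum_nonneg
    intro k hk
    have hk' := (hmemI k).mp hk
    exact mul_nonneg (hq0 k) (by have := hmI k hk'; linarith)
  have hsumIJ : (∑ k ∈ I, q k) + (∑ k ∈ J, q k) = 1 := by
    rw [hIdef, hJdef, Finset.sum_filter_add_sum_filter_not]
    exact hq1
  by_cases hA : A = 0
  · -- the degenerate case: q is a point mass at j0 with m j0 = c
    have hqI : ∀ k : Fin n, k.val < s.val → q k = 0 := by
      intro k hk
      have h := (Finset.sum_eq_zero_iff_of_nonneg (fun k hk => by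
        have hk' := (hmemI k).mp hk
        exact mul_nonneg (hq0 k) (by have := hmI k hk'; linarith))).mp hA k ((hmemI k).mpr hk)
      have hne : m k - c ≠ 0 := by have := hmI k hk; linarith
      rcases mul_eq_zero.mp h with h' | h'
      · exact h'
      · exact absurd h' hne
    have hB0 : ∑ k ∈ J, q k * (c - m k) = 0 := by rw [hAB]; exact hA
    have hqJ : ∀ k : Fin n, ¬ k.val < s.val → q k = 0 ∨ m k = c := by
      intro k hk
      have h := (Finset.sum_eq_zero_iff_of_nonneg (fun k hk => by
        have hk' := (hmemJ k).mp hk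
        exact mul_nonneg (hq0 k) (by have := hmJ k hk'; linarith))).mp hB0 k ((hmemJ k).mpr hk)
      rcases mul_eq_zero.mp h with h' | h'
      · exact Or.inl h'
      · exact Or.inr (by linarith)
    obtain ⟨j0, hj0⟩ : ∃ k : Fin n, q k ≠ 0 := by
      by_contra h
      push_neg at h
      rw [Finset.sum_congr rfl (fun k _ => h k)] at hq1
      simp at hq1
    have hj0J : ¬ j0.val < s.val := fun h => hj0 (hqI j0 h)
    have hmj0 : m j0 = c := by
      rcases hqJ j0 hj0J with h | h
      · exact absurd h hj0
      · exact h
    have hqzero : ∀ k : Fin n, k ≠ j0 → q k = 0 := by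
      intro k hk
      by_cases h : k.val < s.val
      · exact hqI k h
      · rcases hqJ k h with h' | h'
        · exact h'
        · exact absurd (hm.injective (h'.trans hmj0.symm)) hk
    have hqj0 : q j0 = 1 := by
      have := Finset.sum_eq_single (s := (Finset.univ : Finset (Fin n))) (f := q) j0
        (fun k _ hk => hqzero k hk) (fun h => absurd (Finset.mem_univ j0) h)
      rw [← this] ; exact hq1
    set z : Fin n := ⟨0, by omega⟩ with hzdef
    have hzI : z.val < s.val := by simp [hzdef]; omega
    have hzj0 : z ≠ j0 := by
      intro h; rw [← h] at hj0J; exact hj0J hzI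
    have hmz : c < m z := hmI z hzI
    refine ⟨fun i j => (if i = z then (1:ℝ) else 0) * (if j = j0 then 1 else 0), ?_, ?_, ?_, ?_⟩
    · intro i j
      apply mul_nonneg <;> split <;> norm_num
    · intro i j hij
      by_cases hi : i = z
      · by_cases hjc : j = j0
        · subst hi; subst hjc; exact ⟨hzI, by omega⟩
        · simp [hjc] at hij
      · simp [hi] at hij
    · simp [Finset.sum_ite_eq']
    · intro k
      have hrhs : ∑ i, ∑ j, ((if i = z then (1:ℝ) else 0) * (if j = j0 then 1 else 0)) * Q i j k
          = Q z j0 k := by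
        have h1' : ∀ i : Fin n, ∑ j, ((if i = z then (1:ℝ) else 0) * (if j = j0 then 1 else 0)) * Q i j k
            = if i = z then Q i j0 k else 0 := by
          intro i
          by_cases hi : i = z
          · simp [hi, ite_mul, Finset.sum_ite_eq']
          · simp [hi]
        rw [Finset.sum_congr rfl (fun i _ => h1' i)]
        simp [Finset.sum_ite_eq']
      rw [hrhs]
      simp only [Q]
      split_ifs with hkz hkj
      · rw [hkz, hqI z hzI, hmj0, hc, sub_self, zero_div]
      · rw [hkj, hqj0, hmj0, hc]
        rw [div_self (by rw [hc] at hmz; linarith)]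
      · exact hqzero k hkj
  · -- main case: A > 0
    have hApos : 0 < A := lt_of_le_of_ne hA0 (Ne.symm hA)
    set w : Fin n → Fin n → ℝ := fun i j =>
      if i.val < s.val ∧ ¬ j.val < s.val then q i * q j * (m i - m j) / A else 0 with hwdef
    -- generic double-sum reduction
    have hdouble : ∀ f : Fin n → Fin n → ℝ,
        (∑ i, ∑ j, (if i.val < s.val ∧ ¬ j.val < s.val then f i j else 0))
          = ∑ i ∈ I, ∑ j ∈ J, f i j := by
      intro f
      rw [hIdef, Finset.sum_filter]
      apply Finset.sum_congr rfl
      intro i _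
      by_cases hi : i.val < s.val
      · rw [if_pos hi, hJdef, Finset.sum_filter]
        exact Finset.sum_congr rfl (fun j _ => by by_cases hj : ¬ j.val < s.val <;> simp [hi, hj])
      · rw [if_neg hi]
        simp [hi]
    refine ⟨w, ?_, ?_, ?_, ?_⟩
    · intro i j
      simp only [hwdef]
      by_cases hij : i.val < s.val ∧ ¬ j.val < s.val
      · rw [if_pos hij]
        apply div_nonneg _ (le_of_lt hApos)
        apply mul_nonneg (mul_nonneg (hq0 i) (hq0 j))
        have := hIJ i j hij.1 hij.2
        linarith
      · rw [if_neg hij]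
    · intro i j hij
      by_cases hcond : i.val < s.val ∧ ¬ j.val < s.val
      · exact ⟨hcond.1, by omega⟩
      · exfalso; apply hij; simp only [hwdef]; exact if_neg hcond
    · simp only [hwdef]
      rw [hdouble (fun i j => q i * q j * (m i - m j) / A)]
      have hinner : ∀ i ∈ I, ∑ j ∈ J, q i * q j * (m i - m j) / A
          = ((q i * (m i - c)) * (∑ j ∈ J, q j) + q i * A) / A := by
        intro i _
        rw [← Finset.sum_div]
        congr 1
        have : ∀ j ∈ J, q i * q j * (m i - m j)
            = (q i * (m i - c)) * q j + q i * (q j * (c - m j)) := by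
          intro j _; ring
        rw [Finset.sum_congr rfl this, Finset.sum_add_distrib, ← Finset.mul_sum,
          ← Finset.mul_sum, hAB]
      rw [Finset.sum_congr rfl hinner]
      rw [← Finset.sum_div]
      rw [div_eq_iff hA, one_mul]
      rw [Finset.sum_add_distrib, ← Finset.sum_mul, ← Finset.sum_mul, ← hAdef]
      have hSJ := hsumIJ
      nlinarith [hsumIJ]
    · intro k
      have hstep : ∀ i j : Fin n, w i j * Q i j k
          = (if i.val < s.val ∧ ¬ j.val < s.val then q i * q j * (m i - m j) / A * Q i j k else 0) := by
        intro i j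
        simp only [hwdef]
        by_cases hij : i.val < s.val ∧ ¬ j.val < s.val
        · rw [if_pos hij, if_pos hij]
        · rw [if_neg hij, if_neg hij, zero_mul]
      rw [Finset.sum_congr rfl (fun i _ => Finset.sum_congr rfl (fun j _ => hstep i j))]
      rw [hdouble (fun i j => q i * q j * (m i - m j) / A * Q i j k)]
      by_cases hk : k.val < s.val
      · -- k ∈ I
        have hQ : ∀ i ∈ I, ∀ j ∈ J, Q i j k = if k = i then (c - m j) / (m i - m j) else 0 := by
          intro i hi j hj
          have hj' := (hmemJ j).mp hj
          have hkj : k ≠ j := by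
            intro h; rw [h] at hk; exact hj' hk
          simp only [Q]
          by_cases hki : k = i
          · rw [if_pos hki, if_pos hki]
          · rw [if_neg hki, if_neg hki, if_neg hkj]
        have houter : ∀ i ∈ I, ∑ j ∈ J, q i * q j * (m i - m j) / A * Q i j k
            = if k = i then ∑ j ∈ J, q k * (q j * (c - m j)) / A else 0 := by
          intro i hi
          by_cases hki : k = i
          · rw [if_pos hki]
            apply Finset.sum_congr rfl
            intro j hj
            rw [hQ i hi j hj, if_pos hki, ← hki]
            have hj' := (hmemJ j).mp hj
            have hne : m k - m j ≠ 0 := by have := hIJ k j hk hj'; linarith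
            field_simp
          · rw [if_neg hki]
            apply Finset.sum_eq_zero
            intro j hj
            rw [hQ i hi j hj, if_neg hki, mul_zero]
        rw [Finset.sum_congr rfl houter, Finset.sum_ite_eq I k
          (fun _ => ∑ j ∈ J, q k * (q j * (c - m j)) / A), if_pos ((hmemI k).mpr hk)]
        rw [← Finset.sum_div, ← Finset.mul_sum, hAB, mul_div_assoc, div_self hA, mul_one]
      · -- k ∈ J
        have hQ : ∀ i ∈ I, ∀ j ∈ J, Q i j k = if k = j then (m i - c) / (m i - m j) else 0 := by
          intro i hi j hj
          have hi' := (hmemI i).mp hi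
          have hki : k ≠ i := by
            intro h; rw [h] at hk; exact hk hi'
          simp only [Q]
          rw [if_neg hki]
        have hinner' : ∀ i ∈ I, ∑ j ∈ J, q i * q j * (m i - m j) / A * Q i j k
            = q k * (q i * (m i - c)) / A := by
          intro i hi
          have : ∀ j ∈ J, q i * q j * (m i - m j) / A * Q i j k
              = if k = j then q k * (q i * (m i - c)) / A else 0 := by
            intro j hj
            rw [hQ i hi j hj]
            by_cases hkj : k = j
            · rw [if_pos hkj, if_pos hkj, ← hkj]
              have hi' := (hmemI i).mp hi
              have hne : m i - m k ≠ 0 := by have := hIJ i k hi' hk; linarith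
              field_simp
            · rw [if_neg hkj, if_neg hkj, mul_zero]
          rw [Finset.sum_congr rfl this, Finset.sum_ite_eq J k
            (fun _ => q k * (q i * (m i - c)) / A), if_pos ((hmemJ k).mpr hk)]
        rw [Finset.sum_congr rfl hinner']
        rw [← Finset.sum_div, ← Finset.mul_sum, ← hAdef, mul_div_assoc, div_self hA, mul_one]
end

section
/- A nonnegative Möbius inverse μ: 𝒫(Ω) → ℝ≥0 with μ(∅)=0, Σ_A μ(A) = 1, whose focal sets {A : μ(A) > 0} form a chain under set inclusion, induces a capacity φ(A) = Σ_{B ⊆ A} μ(B) that is a necessity measure, i.e., φ(A∩B) = min{φ(A), φ(B)} for all A, B ⊆ Ω. -/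
private lemma aux_eq {Ω : Type*} [Fintype Ω] [DecidableEq Ω] (μ : Finset Ω → ℝ)
    (hnn : ∀ A : Finset Ω, 0 ≤ μ A) (A B : Finset Ω)
    (h : ∀ C : Finset Ω, 0 < μ C → C ⊆ A → C ⊆ B) :
    (∑ C ∈ (A ∩ B).powerset, μ C) = ∑ C ∈ A.powerset, μ C := by
  apply Finset.sum_subset
  · exact Finset.powerset_mono.mpr Finset.inter_subset_left
  · intro C hC hC'
    by_contra hne
    have hpos : 0 < μ C := lt_of_le_of_ne (hnn C) (Ne.symm hne)
    have hCA : C ⊆ A := Finset.mem_powerset.mp hC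
    exact hC' (Finset.mem_powerset.mpr (Finset.subset_inter hCA (h C hpos hCA)))

/-- A nonnegative Möbius inverse with total mass one whose focal sets form a chain
under inclusion induces a necessity measure. -/
theorem chain_mobius_induces_necessity {Ω : Type*} [Fintype Ω] [DecidableEq Ω]
    [Nonempty Ω] (μ : Finset Ω → ℝ)
    (hnn : ∀ A : Finset Ω, 0 ≤ μ A) (h0 : μ ∅ = 0)
    (hsum : (∑ A : Finset Ω, μ A) = 1)
    (hchain : ∀ A B : Finset Ω, 0 < μ A → 0 < μ B → A ⊆ B ∨ B ⊆ A) :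
    ∀ A B : Finset Ω,
      (∑ C ∈ (A ∩ B).powerset, μ C) =
        min (∑ C ∈ A.powerset, μ C) (∑ C ∈ B.powerset, μ C) := by
  intro A B
  have mono : ∀ X Y : Finset Ω, X ⊆ Y →
      (∑ C ∈ X.powerset, μ C) ≤ ∑ C ∈ Y.powerset, μ C := fun X Y hXY =>
    Finset.sum_le_sum_of_subset_of_nonneg (Finset.powerset_mono.mpr hXY)
      (fun C _ _ => hnn C)
  by_cases h : ∀ C : Finset Ω, 0 < μ C → C ⊆ A → C ⊆ B
  · rw [aux_eq μ hnn A B h]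
    have : (∑ C ∈ A.powerset, μ C) ≤ ∑ C ∈ B.powerset, μ C := by
      rw [← aux_eq μ hnn A B h]
      exact mono _ _ Finset.inter_subset_right
    exact (min_eq_left this).symm
  · push_neg at h
    obtain ⟨C, hCpos, hCA, hCB⟩ := h
    have h' : ∀ D : Finset Ω, 0 < μ D → D ⊆ B → D ⊆ A := by
      intro D hDpos hDB
      rcases hchain C D hCpos hDpos with hCD | hDC
      · exact absurd (hCD.trans hDB) hCB
      · exact hDC.trans hCA
    rw [Finset.inter_comm, aux_eq μ hnn B A h']
    have : (∑ D ∈ B.powerset, μ D) ≤ ∑ D ∈ A.powerset, μ D := by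
      rw [← aux_eq μ hnn B A h']
      exact mono _ _ Finset.inter_subset_right
    exact (min_eq_right this).symm
end

section
/- Let Ω be finite, Ω = {1,...,n}, 𝒰 the collection of nonempty subsets of Ω, and S¹,...,Sᵐ: Ω → ℝ with lower prices π̲(Sᵏ) ∈ ℝ. For X: Ω → ℝ write X^ℓ(B) = min_{i∈B} X(i). Then there exists a belief function B̂el on 𝒫(Ω) with Choquet integral ℂ_{B̂el}(Sᵏ) = π̲(Sᵏ) for all k = 1,...,m if and only if for every λ ∈ ℝᵐ, min_{B∈𝒰} Σₖ λₖ((Sᵏ)^ℓ(B) − π̲(Sᵏ)) ≤ 0 ≤ max_{B∈𝒰} Σₖ λₖ((Sᵏ)^ℓ(B) − π̲(Sᵏ)). -/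
/-- Generalized avoiding Dutch book theorem: there exists a belief function whose
Choquet integrals agree with the lower prices `π̲(Sᵏ)` iff every portfolio `λ` has a
nonpositive gain on some nonempty event and a nonnegative gain on some nonempty event. -/
theorem generalized_dutch_book (n mkt : ℕ) (hn : 0 < n)
    (S : Fin mkt → Fin n → ℝ) (π : Fin mkt → ℝ) :
    (∃ μ : Finset (Fin n) → ℝ,
      (∀ B, 0 ≤ μ B) ∧ μ ∅ = 0 ∧ (∑ B : Finset (Fin n), μ B) = 1 ∧
      ∀ k, (∑ B : Finset (Fin n),
        (if h : B.Nonempty then B.inf' h (S k) else 0) * μ B) = π k) ↔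
    (∀ lam : Fin mkt → ℝ,
      (∃ B : Finset (Fin n), ∃ hB : B.Nonempty,
        (∑ k, lam k * (B.inf' hB (S k) - π k)) ≤ 0) ∧
      (∃ B : Finset (Fin n), ∃ hB : B.Nonempty,
        0 ≤ ∑ k, lam k * (B.inf' hB (S k) - π k))) := by
  classical
  have hFn : Nonempty (Fin n) := ⟨⟨0, hn⟩⟩
  set ι := {B : Finset (Fin n) // B.Nonempty} with hιdef
  have hιne : Nonempty ι := ⟨⟨Finset.univ, Finset.univ_nonempty⟩⟩
  set v : ι → (Fin mkt → ℝ) := fun B k => B.1.inf' B.2 (S k) with hv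
  -- sums over all finsets of a function vanishing at ∅ are sums over ι
  have hsum : ∀ g : Finset (Fin n) → ℝ, g ∅ = 0 →
      (∑ B : Finset (Fin n), g B) = ∑ B : ι, g B.1 := by
    intro g hg
    rw [← Finset.sum_filter_add_sum_filter_not Finset.univ (fun B => B.Nonempty) g]
    have h2 : (Finset.univ.filter (fun B : Finset (Fin n) => ¬ B.Nonempty)) = {∅} := by
      ext B; simp [Finset.not_nonempty_iff_eq_empty]
    have h1 : (∑ B ∈ Finset.univ.filter (fun B : Finset (Fin n) => B.Nonempty), g B)
        = ∑ B : ι, g B.1 :=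
      Finset.sum_subtype _ (fun x => by simp) g
    rw [h1, h2, Finset.sum_singleton, hg, add_zero]
  constructor
  · -- LHS → RHS
    rintro ⟨μ, hμ0, hμe, hμ1, hμπ⟩ lam
    have htot : (∑ B : ι, μ B.1) = 1 := by rw [← hsum μ hμe]; exact hμ1
    have hpr : ∀ k, (∑ B : ι, μ B.1 * v B k) = π k := by
      intro k
      have := hμπ k
      rw [hsum _ (by simp)] at this
      rw [← this]
      refine Finset.sum_congr rfl fun B _ => ?_
      rw [dif_pos B.2, mul_comm]
    set a : ι → ℝ := fun B => ∑ k, lam k * (v B k - π k) with ha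
    have hzero : (∑ B : ι, μ B.1 * a B) = 0 := by
      have e : ∀ B : ι, μ B.1 * a B
          = ∑ k, (lam k * (μ B.1 * v B k) - (lam k * π k) * μ B.1) := by
        intro B
        rw [ha, Finset.mul_sum]
        exact Finset.sum_congr rfl fun k _ => by ring
      rw [Finset.sum_congr rfl fun B _ => e B, Finset.sum_comm]
      refine Finset.sum_eq_zero fun k _ => ?_
      rw [Finset.sum_sub_distrib, ← Finset.mul_sum, ← Finset.mul_sum, hpr k, htot]
      ring
    have hex : ∃ B : ι, 0 < μ B.1 := by
      by_contra h
      push_neg at h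
      have : (∑ B : ι, μ B.1) = 0 :=
        Finset.sum_eq_zero fun B _ => le_antisymm (h B) (hμ0 B.1)
      rw [htot] at this; norm_num at this
    obtain ⟨B0, hB0⟩ := hex
    constructor
    · by_contra h
      push_neg at h
      have hpos : ∀ B : ι, 0 < a B := fun B => h B.1 B.2
      have : (0:ℝ) < ∑ B : ι, μ B.1 * a B :=
        Finset.sum_pos' (fun B _ => mul_nonneg (hμ0 B.1) (hpos B).le)
          ⟨B0, Finset.mem_univ _, mul_pos hB0 (hpos B0)⟩
      rw [hzero] at this; norm_num at this
    · by_contra h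
      push_neg at h
      have hneg : ∀ B : ι, a B < 0 := fun B => h B.1 B.2
      have : (0:ℝ) < ∑ B : ι, -(μ B.1 * a B) :=
        Finset.sum_pos'
          (fun B _ => neg_nonneg.2 (mul_nonpos_of_nonneg_of_nonpos (hμ0 B.1) (hneg B).le))
          ⟨B0, Finset.mem_univ _, by nlinarith [hneg B0]⟩
      rw [Finset.sum_neg_distrib, hzero] at this; norm_num at this
  · -- RHS → LHS
    intro hRHS
    have hmem : π ∈ convexHull ℝ (Set.range v) := by
      by_contra hπ
      have hcl : IsClosed (convexHull ℝ (Set.range v)) :=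
        ((Set.finite_range v).isCompact_convexHull (𝕜 := ℝ)).isClosed
      obtain ⟨f, u, hfa, hfπ⟩ :=
        geometric_hahn_banach_closed_point (convex_convexHull ℝ _) hcl hπ
      have hf : ∀ y : Fin mkt → ℝ, f y = ∑ k, y k * f (Pi.single k 1) := by
        intro y
        have h1 : ∀ (i : Fin mkt) (c : ℝ),
            (Pi.single i c : Fin mkt → ℝ) = c • (Pi.single i 1 : Fin mkt → ℝ) := by
          intro i c
          funext j
          by_cases hj : j = i <;> simp [Pi.single_apply, hj]
        conv_lhs => rw [← Finset.univ_sum_single y]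
        rw [map_sum]
        refine Finset.sum_congr rfl fun k _ => ?_
        rw [h1 k (y k), map_smul, smul_eq_mul]
      set lam : Fin mkt → ℝ := fun k => -(f (Pi.single k 1)) with hlam
      obtain ⟨B, hB, hle⟩ := (hRHS lam).1
      have hvm : f (v ⟨B, hB⟩) < u := hfa _ (subset_convexHull ℝ _ ⟨⟨B, hB⟩, rfl⟩)
      have key : (∑ k, lam k * (B.inf' hB (S k) - π k)) = f π - f (v ⟨B, hB⟩) := by
        have h2 := hf (v ⟨B, hB⟩ - π)
        rw [map_sub] at h2
        have e : ∀ k, lam k * (B.inf' hB (S k) - π k)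
            = -(((v ⟨B, hB⟩ - π) k) * f (Pi.single k 1)) := by
          intro k
          simp only [hlam, Pi.sub_apply, hv]
          ring
        rw [Finset.sum_congr rfl fun k _ => e k, Finset.sum_neg_distrib, ← h2]
        ring
      rw [key] at hle
      linarith
    rw [mem_convexHull_iff_exists_fintype] at hmem
    obtain ⟨κ, hκ, w, z, hw0, hw1, hz, hx⟩ := hmem
    choose c hc using hz
    refine ⟨fun B => if h : B.Nonempty then ∑ i, (if c i = ⟨B, h⟩ then w i else 0) else 0,
      ?_, ?_, ?_, ?_⟩
    · intro B
      dsimp only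
      split_ifs with h
      · exact Finset.sum_nonneg fun i _ => by split_ifs with h2 <;> simp [hw0 i]
      · exact le_refl 0
    · simp
    · rw [hsum _ (by simp)]
      have e : ∀ B : ι, (if h : B.1.Nonempty then ∑ i, (if c i = ⟨B.1, h⟩ then w i else 0) else 0)
          = ∑ i, (if c i = B then w i else 0) := by
        intro B; rw [dif_pos B.2]
      rw [Finset.sum_congr rfl fun B _ => e B, Finset.sum_comm]
      rw [← hw1]
      exact Finset.sum_congr rfl fun i _ => by
        rw [Finset.sum_eq_single (c i) (fun B _ hB => if_neg (Ne.symm hB)) (fun h => absurd (Finset.mem_univ _) h), if_pos rfl]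
    · intro k
      rw [hsum _ (by simp)]
      have e : ∀ B : ι, ((if h : B.1.Nonempty then B.1.inf' h (S k) else 0) *
            (if h : B.1.Nonempty then ∑ i, (if c i = ⟨B.1, h⟩ then w i else 0) else 0))
          = ∑ i, (if c i = B then v B k * w i else 0) := by
        intro B
        rw [dif_pos B.2, dif_pos B.2, Finset.mul_sum]
        exact Finset.sum_congr rfl fun i _ => by rw [mul_ite, mul_zero]
      rw [Finset.sum_congr rfl fun B _ => e B, Finset.sum_comm]
      have e2 : ∀ i, (∑ B : ι, if c i = B then v B k * w i else 0) = z i k * w i := by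
        intro i
        rw [Finset.sum_eq_single (c i) (fun B _ hB => if_neg (Ne.symm hB)) (fun h => absurd (Finset.mem_univ _) h), if_pos rfl, hc i]
      rw [Finset.sum_congr rfl fun i _ => e2 i]
      have := congrFun hx k
      rw [Finset.sum_apply] at this
      rw [← this]
      exact Finset.sum_congr rfl fun i _ => by rw [Pi.smul_apply, smul_eq_mul, mul_comm]
end

section
/- Every feasible solution of the strong martingale inner approximation problem is a probability measure: if a belief function B̂el on 𝒫(Ω) with Möbius inverse μ̂ satisfies both Σᵢ mᵢ (Σ_{{i}⊆B⊆{1,...,i}} μ̂(B)) = 1+r and Σᵢ mᵢ (Σ_{{i}⊆B⊆{i,...,n}} μ̂(B)) = 1+r, where m₁ > ... > mₙ, then μ̂(B) = 0 for every B with |B| ≥ 2, i.e., B̂el is additive (a probability measure) satisfying the martingale condition Σᵢ mᵢ μ̂({i}) = 1+r. -/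
/-- Every feasible solution of the strong martingale inner approximation problem is a
probability measure: if the Möbius inverse `μ̂` of a belief function satisfies both
martingale equations (for `S₁/S₀` and `-S₁/S₀`), then `μ̂` vanishes on all sets of
cardinality at least two and satisfies the classical martingale condition. -/
theorem strong_martingale_is_probability (n : ℕ) (hn : 0 < n)
    (m : Fin n → ℝ) (hm : StrictAnti m) (hmpos : ∀ k, 0 < m k) (r : ℝ)
    (μ : Finset (Fin n) → ℝ)
    (hnn : ∀ B, 0 ≤ μ B) (h0 : μ ∅ = 0)
    (hsum : (∑ B : Finset (Fin n), μ B) = 1)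
    (h1 : (∑ i : Fin n,
      m i * ∑ B ∈ (Finset.Iic i).powerset.filter (fun B => i ∈ B), μ B) = 1 + r)
    (h2 : (∑ i : Fin n,
      m i * ∑ B ∈ (Finset.Ici i).powerset.filter (fun B => i ∈ B), μ B) = 1 + r) :
    (∀ B : Finset (Fin n), 2 ≤ B.card → μ B = 0) ∧
    (∑ i : Fin n, m i * μ {i}) = 1 + r := by
  classical
  have hmax : ∀ (i : Fin n) (B : Finset (Fin n)),
      (B ∈ (Finset.Iic i).powerset.filter (fun B => i ∈ B)) ↔
      ∃ h : B.Nonempty, B.max' h = i := by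
    intro i B
    simp only [Finset.mem_filter, Finset.mem_powerset]
    constructor
    · rintro ⟨hsub, hi⟩
      exact ⟨⟨i, hi⟩, le_antisymm
        (Finset.max'_le _ _ _ fun b hb => Finset.mem_Iic.mp (hsub hb))
        (Finset.le_max' _ _ hi)⟩
    · rintro ⟨h, rfl⟩
      exact ⟨fun b hb => Finset.mem_Iic.mpr (Finset.le_max' _ _ hb),
        Finset.max'_mem _ _⟩
  have hmin : ∀ (i : Fin n) (B : Finset (Fin n)),
      (B ∈ (Finset.Ici i).powerset.filter (fun B => i ∈ B)) ↔
      ∃ h : B.Nonempty, B.min' h = i := by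
    intro i B
    simp only [Finset.mem_filter, Finset.mem_powerset]
    constructor
    · rintro ⟨hsub, hi⟩
      exact ⟨⟨i, hi⟩, le_antisymm (Finset.min'_le _ _ hi)
        (Finset.le_min' _ _ _ fun b hb => Finset.mem_Ici.mp (hsub hb))⟩
    · rintro ⟨h, rfl⟩
      exact ⟨fun b hb => Finset.mem_Ici.mpr (Finset.min'_le _ _ hb),
        Finset.min'_mem _ _⟩
  have e1 : (∑ i : Fin n,
      m i * ∑ B ∈ (Finset.Iic i).powerset.filter (fun B => i ∈ B), μ B)
      = ∑ B : Finset (Fin n), (if h : B.Nonempty then m (B.max' h) else 0) * μ B := by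
    calc (∑ i : Fin n,
        m i * ∑ B ∈ (Finset.Iic i).powerset.filter (fun B => i ∈ B), μ B)
        = ∑ i : Fin n, ∑ B : Finset (Fin n),
            if B ∈ (Finset.Iic i).powerset.filter (fun B => i ∈ B)
            then m i * μ B else 0 := by
          refine Finset.sum_congr rfl fun i _ => ?_
          rw [Finset.mul_sum, Finset.sum_ite_mem, Finset.univ_inter]
      _ = ∑ B : Finset (Fin n), ∑ i : Fin n,
            if B ∈ (Finset.Iic i).powerset.filter (fun B => i ∈ B)
            then m i * μ B else 0 := Finset.sum_comm
      _ = ∑ B : Finset (Fin n), (if h : B.Nonempty then m (B.max' h) else 0) * μ B := by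
          refine Finset.sum_congr rfl fun B _ => ?_
          by_cases hB : B.Nonempty
          · rw [dif_pos hB, Finset.sum_eq_single (B.max' hB)]
            · rw [if_pos ((hmax _ _).mpr ⟨hB, rfl⟩)]
            · intro i _ hne
              rw [if_neg]
              intro hmem
              obtain ⟨h, hi⟩ := (hmax i B).mp hmem
              exact hne hi.symm
            · intro h; exact absurd (Finset.mem_univ _) h
          · rw [dif_neg hB, zero_mul]
            refine Finset.sum_eq_zero fun i _ => ?_
            rw [if_neg]
            intro hmem
            obtain ⟨h, _⟩ := (hmax i B).mp hmem
            exact hB h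
  have e2 : (∑ i : Fin n,
      m i * ∑ B ∈ (Finset.Ici i).powerset.filter (fun B => i ∈ B), μ B)
      = ∑ B : Finset (Fin n), (if h : B.Nonempty then m (B.min' h) else 0) * μ B := by
    calc (∑ i : Fin n,
        m i * ∑ B ∈ (Finset.Ici i).powerset.filter (fun B => i ∈ B), μ B)
        = ∑ i : Fin n, ∑ B : Finset (Fin n),
            if B ∈ (Finset.Ici i).powerset.filter (fun B => i ∈ B)
            then m i * μ B else 0 := by
          refine Finset.sum_congr rfl fun i _ => ?_
          rw [Finset.mul_sum, Finset.sum_ite_mem, Finset.univ_inter]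
      _ = ∑ B : Finset (Fin n), ∑ i : Fin n,
            if B ∈ (Finset.Ici i).powerset.filter (fun B => i ∈ B)
            then m i * μ B else 0 := Finset.sum_comm
      _ = ∑ B : Finset (Fin n), (if h : B.Nonempty then m (B.min' h) else 0) * μ B := by
          refine Finset.sum_congr rfl fun B _ => ?_
          by_cases hB : B.Nonempty
          · rw [dif_pos hB, Finset.sum_eq_single (B.min' hB)]
            · rw [if_pos ((hmin _ _).mpr ⟨hB, rfl⟩)]
            · intro i _ hne
              rw [if_neg]
              intro hmem
              obtain ⟨h, hi⟩ := (hmin i B).mp hmem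
              exact hne hi.symm
            · intro h; exact absurd (Finset.mem_univ _) h
          · rw [dif_neg hB, zero_mul]
            refine Finset.sum_eq_zero fun i _ => ?_
            rw [if_neg]
            intro hmem
            obtain ⟨h, _⟩ := (hmin i B).mp hmem
            exact hB h
  have hdiff : ∑ B : Finset (Fin n),
      ((if h : B.Nonempty then m (B.min' h) else 0)
        - (if h : B.Nonempty then m (B.max' h) else 0)) * μ B = 0 := by
    simp only [sub_mul]
    rw [Finset.sum_sub_distrib, ← e1, ← e2, h1, h2, sub_self]
  have hterm : ∀ B ∈ (Finset.univ : Finset (Finset (Fin n))),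
      0 ≤ ((if h : B.Nonempty then m (B.min' h) else 0)
        - (if h : B.Nonempty then m (B.max' h) else 0)) * μ B := by
    intro B _
    apply mul_nonneg _ (hnn B)
    by_cases hB : B.Nonempty
    · rw [dif_pos hB, dif_pos hB, sub_nonneg]
      exact hm.antitone (Finset.min'_le _ _ (Finset.max'_mem _ hB))
    · simp [dif_neg hB]
  have hzero := (Finset.sum_eq_zero_iff_of_nonneg hterm).mp hdiff
  have part1 : ∀ B : Finset (Fin n), 2 ≤ B.card → μ B = 0 := by
    intro B hc
    have hB : B.Nonempty := Finset.card_pos.mp (by omega)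
    have hz := hzero B (Finset.mem_univ B)
    rw [dif_pos hB, dif_pos hB] at hz
    have hlt : B.min' hB < B.max' hB := Finset.min'_lt_max'_of_card B (by omega)
    have hpos : 0 < m (B.min' hB) - m (B.max' hB) := sub_pos.mpr (hm hlt)
    rcases mul_eq_zero.mp hz with h | h
    · exact absurd h (ne_of_gt hpos)
    · exact h
  refine ⟨part1, ?_⟩
  rw [e1] at h1
  rw [← h1]
  have himg : ∑ B ∈ Finset.univ.image (fun i : Fin n => ({i} : Finset (Fin n))),
      (if h : B.Nonempty then m (B.max' h) else 0) * μ B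
      = ∑ B : Finset (Fin n), (if h : B.Nonempty then m (B.max' h) else 0) * μ B := by
    refine Finset.sum_subset (Finset.subset_univ _) fun B _ hB => ?_
    have hcard : B.card ≠ 1 := by
      intro hc
      obtain ⟨i, rfl⟩ := Finset.card_eq_one.mp hc
      exact hB (Finset.mem_image.mpr ⟨i, Finset.mem_univ i, rfl⟩)
    rcases Nat.lt_or_ge B.card 2 with h | h
    · interval_cases hc : B.card
      · rw [Finset.card_eq_zero.mp hc, h0, mul_zero]
      · exact absurd rfl hcard
    · rw [part1 B h, mul_zero]
  rw [← himg, Finset.sum_image (fun i _ j _ h => Finset.singleton_injective h)]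
  refine Finset.sum_congr rfl fun i _ => ?_
  rw [dif_pos (Finset.singleton_nonempty i), Finset.max'_singleton]
end
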